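/- Let A be an n×n real symmetric matrix, Q an n×k real matrix, q_{k+1} ∈ ℝⁿ, β_{k+1} ∈ ℝ, E an n×k real matrix, and T a k×k real symmetric tridiagonal matrix such that A·Q = Q·T + β_{k+1}·q_{k+1}·e_kᵀ + E. Let η > 0 and suppose every eigenvalue of T lies in [λmin(A) − η, λmax(A) + η]. Set q₁ = Q·e₁. Then for every natural number i with i < k, ‖Q·T̄_i(T)·e₁ − T̄_i(A)·q₁‖ ≤ (2i²/η)·‖E‖. -/

import Mathlib

open Matrix Polynomial Set

/-- Euclidean norm of a vector in `ℝⁿ`. -/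
noncomputable def vecNorm {n : ℕ} (v : Fin n → ℝ) : ℝ :=
  Real.sqrt (∑ i, v i ^ 2)

/-- Spectral (operator) norm of a real matrix. -/
noncomputable def matNorm {m n : ℕ} (A : Matrix (Fin m) (Fin n) ℝ) : ℝ :=
  sSup {c : ℝ | ∃ v : Fin n → ℝ, vecNorm v ≤ 1 ∧ c = vecNorm (A.mulVec v)}

/-- Largest eigenvalue of a square real matrix. -/
noncomputable def lmax {n : ℕ} (A : Matrix (Fin n) (Fin n) ℝ) : ℝ :=
  sSup {μ : ℝ | ∃ v : Fin n → ℝ, v ≠ 0 ∧ A.mulVec v = μ • v}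

/-- Smallest eigenvalue of a square real matrix. -/
noncomputable def lmin {n : ℕ} (A : Matrix (Fin n) (Fin n) ℝ) : ℝ :=
  sInf {μ : ℝ | ∃ v : Fin n → ℝ, v ≠ 0 ∧ A.mulVec v = μ • v}

/-- A matrix is tridiagonal if `T i j = 0` whenever `|i - j| > 1`. -/
def IsTridiagonal {k : ℕ} (T : Matrix (Fin k) (Fin k) ℝ) : Prop :=
  ∀ i j : Fin k, 1 < |(i : ℤ) - (j : ℤ)| → T i j = 0

/-- The matrix function `f(A)` of a real symmetric matrix, defined through the
eigendecomposition `A = V Λ Vᵀ` as `V f(Λ) Vᵀ`. -/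
noncomputable def matFun {n : ℕ} {A : Matrix (Fin n) (Fin n) ℝ} (hA : A.IsHermitian)
    (f : ℝ → ℝ) : Matrix (Fin n) (Fin n) ℝ :=
  (hA.eigenvectorUnitary : Matrix (Fin n) (Fin n) ℝ) * Matrix.diagonal (f ∘ hA.eigenvalues) *
    star (hA.eigenvectorUnitary : Matrix (Fin n) (Fin n) ℝ)

/-- The `i`-th Chebyshev polynomial of the first kind, shifted and stretched to the range
`[lmin A - η, lmax A + η]`: with `r_max = lmax A + η`, `r_min = lmin A - η` and
`δ = 2 / (r_max - r_min)`, this is `y ↦ T_i (δ (y - r_min) - 1)`. -/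
noncomputable def shiftedCheb {n : ℕ} (A : Matrix (Fin n) (Fin n) ℝ) (η : ℝ) (i : ℕ) :
    Polynomial ℝ :=
  (Polynomial.Chebyshev.T ℝ i).comp
    (Polynomial.C (2 / ((lmax A + η) - (lmin A - η))) *
      (Polynomial.X - Polynomial.C (lmin A - η)) - 1)

section VecNorm
variable {n : ℕ}

lemma vecNorm_eq_norm (v : Fin n → ℝ) :
    vecNorm v = ‖(WithLp.equiv 2 (Fin n → ℝ)).symm v‖ := by
  rw [EuclideanSpace.norm_eq]
  unfold vecNorm
  congr 1
  refine Finset.sum_congr rfl fun i _ => ?_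
  rw [WithLp.equiv_symm_apply, PiLp.toLp_apply, Real.norm_eq_abs, sq_abs]

lemma vecNorm_nonneg (v : Fin n → ℝ) : 0 ≤ vecNorm v := Real.sqrt_nonneg _

lemma vecNorm_smul (c : ℝ) (v : Fin n → ℝ) : vecNorm (c • v) = |c| * vecNorm v := by
  rw [vecNorm_eq_norm, vecNorm_eq_norm, WithLp.equiv_symm_apply, WithLp.toLp_smul, norm_smul, Real.norm_eq_abs]

lemma vecNorm_add_le (a b : Fin n → ℝ) : vecNorm (a + b) ≤ vecNorm a + vecNorm b := by
  rw [vecNorm_eq_norm, vecNorm_eq_norm, vecNorm_eq_norm, WithLp.equiv_symm_apply, WithLp.toLp_add]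
  exact norm_add_le _ _

lemma vecNorm_sum_le {ι : Type*} (s : Finset ι) (f : ι → (Fin n → ℝ)) :
    vecNorm (∑ i ∈ s, f i) ≤ ∑ i ∈ s, vecNorm (f i) := by
  simp only [vecNorm_eq_norm]
  rw [show (WithLp.equiv 2 (Fin n → ℝ)).symm (∑ i ∈ s, f i)
      = ∑ i ∈ s, (WithLp.equiv 2 (Fin n → ℝ)).symm (f i) from
    map_sum (WithLp.linearEquiv 2 ℝ (Fin n → ℝ)).symm f s]
  exact norm_sum_le _ _

lemma vecNorm_eq_zero_iff {v : Fin n → ℝ} : vecNorm v = 0 ↔ v = 0 := by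
  rw [vecNorm_eq_norm, norm_eq_zero]
  constructor
  · intro h
    exact (WithLp.equiv 2 (Fin n → ℝ)).symm.injective (by simpa using h)
  · intro h; subst h; rfl

lemma vecNorm_pos {v : Fin n → ℝ} (hv : v ≠ 0) : 0 < vecNorm v :=
  lt_of_le_of_ne (vecNorm_nonneg v) fun h => hv (vecNorm_eq_zero_iff.mp h.symm)

lemma vecNorm_single_one {j : Fin n} : vecNorm (Pi.single j 1) = 1 := by
  unfold vecNorm
  rw [show (∑ i, (Pi.single j 1 : Fin n → ℝ) i ^ 2) = 1 from ?_, Real.sqrt_one]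
  rw [Finset.sum_eq_single j]
  · simp
  · intro b _ hb; simp [Pi.single_apply, hb]
  · simp

end VecNorm


lemma vecNorm_zero {n : ℕ} : vecNorm (0 : Fin n → ℝ) = 0 := by simp [vecNorm]

section MatNorm
variable {m n : ℕ}

lemma vecNorm_mulVec_le_frob (M : Matrix (Fin m) (Fin n) ℝ) (v : Fin n → ℝ) :
    vecNorm (M.mulVec v) ≤ Real.sqrt (∑ i, ∑ j, M i j ^ 2) * vecNorm v := by
  rw [vecNorm, vecNorm, ← Real.sqrt_mul (by positivity)]
  apply Real.sqrt_le_sqrt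
  rw [Finset.sum_mul]
  apply Finset.sum_le_sum
  intro i _
  rw [Matrix.mulVec, dotProduct]
  exact Finset.sum_mul_sq_le_sq_mul_sq _ _ _

lemma matNorm_bddAbove (M : Matrix (Fin m) (Fin n) ℝ) :
    BddAbove {c : ℝ | ∃ v : Fin n → ℝ, vecNorm v ≤ 1 ∧ c = vecNorm (M.mulVec v)} := by
  refine ⟨Real.sqrt (∑ i, ∑ j, M i j ^ 2), ?_⟩
  rintro c ⟨v, hv, rfl⟩
  calc vecNorm (M.mulVec v) ≤ Real.sqrt (∑ i, ∑ j, M i j ^ 2) * vecNorm v :=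
        vecNorm_mulVec_le_frob M v
    _ ≤ Real.sqrt (∑ i, ∑ j, M i j ^ 2) * 1 := by
        exact mul_le_mul_of_nonneg_left hv (Real.sqrt_nonneg _)
    _ = _ := mul_one _

lemma matNorm_nonneg (M : Matrix (Fin m) (Fin n) ℝ) : 0 ≤ matNorm M := by
  have hz : vecNorm (0 : Fin n → ℝ) = 0 := by simp [vecNorm]
  have hz' : vecNorm (0 : Fin m → ℝ) = 0 := by simp [vecNorm]
  have : (0:ℝ) ∈ {c : ℝ | ∃ v : Fin n → ℝ, vecNorm v ≤ 1 ∧ c = vecNorm (M.mulVec v)} :=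
    ⟨0, by rw [hz]; norm_num, by rw [Matrix.mulVec_zero, hz']⟩
  exact le_csSup (matNorm_bddAbove M) this

lemma vecNorm_mulVec_le (M : Matrix (Fin m) (Fin n) ℝ) (v : Fin n → ℝ) :
    vecNorm (M.mulVec v) ≤ matNorm M * vecNorm v := by
  rcases eq_or_ne v 0 with rfl | hv
  · have hz : vecNorm (0 : Fin n → ℝ) = 0 := by simp [vecNorm]
    have hz' : vecNorm (0 : Fin m → ℝ) = 0 := by simp [vecNorm]
    rw [Matrix.mulVec_zero, hz, hz', mul_zero]
  · have hpos := vecNorm_pos hv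
    have h1 : vecNorm ((vecNorm v)⁻¹ • v) ≤ 1 := by
      rw [vecNorm_smul, abs_of_pos (by positivity), inv_mul_cancel₀ (ne_of_gt hpos)]
    have h2 : vecNorm (M.mulVec ((vecNorm v)⁻¹ • v)) ≤ matNorm M :=
      le_csSup (matNorm_bddAbove M) ⟨_, h1, rfl⟩
    rw [Matrix.mulVec_smul, vecNorm_smul, abs_of_pos (by positivity)] at h2
    calc vecNorm (M.mulVec v) = vecNorm v * ((vecNorm v)⁻¹ * vecNorm (M.mulVec v)) := by
          field_simp
      _ ≤ vecNorm v * matNorm M := mul_le_mul_of_nonneg_left h2 (le_of_lt hpos)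
      _ = matNorm M * vecNorm v := mul_comm _ _

end MatNorm

section Spectral
variable {m : ℕ}

lemma vecNorm_mulVec_orth {V : Matrix (Fin m) (Fin m) ℝ} (hV : Vᵀ * V = 1)
    (x : Fin m → ℝ) : vecNorm (V.mulVec x) = vecNorm x := by
  unfold vecNorm
  congr 1
  have h1 : ∀ (w : Fin m → ℝ), ∑ i, w i ^ 2 = w ⬝ᵥ w := by
    intro w; simp [dotProduct, pow_two]
  rw [h1, h1, Matrix.dotProduct_mulVec, ← Matrix.mulVec_transpose,
    Matrix.mulVec_mulVec, hV, Matrix.one_mulVec]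

lemma pow_conj {M : Matrix (Fin m) (Fin m) ℝ} (hM : M.IsHermitian) (N : ℕ) :
    M ^ N = (hM.eigenvectorUnitary : Matrix (Fin m) (Fin m) ℝ) *
      Matrix.diagonal (fun j => hM.eigenvalues j ^ N) *
      star (hM.eigenvectorUnitary : Matrix (Fin m) (Fin m) ℝ) := by
  set V := (hM.eigenvectorUnitary : Matrix (Fin m) (Fin m) ℝ) with hVdef
  have hmem := (hM.eigenvectorUnitary).2
  have hV1 : star V * V = 1 := (Unitary.mem_iff.mp hmem).1
  have hV2 : V * star V = 1 := (Unitary.mem_iff.mp hmem).2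
  induction N with
  | zero => simp [pow_zero, Matrix.diagonal_one, hV2]
  | succ N ih =>
    have hspec : M = V * Matrix.diagonal (RCLike.ofReal ∘ hM.eigenvalues) * star V :=
      hM.spectral_theorem
    have hspec' : M = V * Matrix.diagonal hM.eigenvalues * star V := by
      simpa using hspec
    have hd : Matrix.diagonal (fun j => hM.eigenvalues j ^ N) * Matrix.diagonal hM.eigenvalues
        = Matrix.diagonal (fun j => hM.eigenvalues j ^ (N + 1)) := by
      rw [Matrix.diagonal_mul_diagonal]
      simp [pow_succ]
    calc M ^ (N + 1) = M ^ N * M := pow_succ M N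
      _ = (V * Matrix.diagonal (fun j => hM.eigenvalues j ^ N) * star V) *
            (V * Matrix.diagonal hM.eigenvalues * star V) := by rw [← hspec', ← ih]
      _ = V * Matrix.diagonal (fun j => hM.eigenvalues j ^ (N + 1)) * star V := by
          simp only [Matrix.mul_assoc]
          rw [← Matrix.mul_assoc (star V) V, hV1, Matrix.one_mul,
            ← Matrix.mul_assoc (Matrix.diagonal fun j => hM.eigenvalues j ^ N), hd]

lemma aeval_conj {M : Matrix (Fin m) (Fin m) ℝ} (hM : M.IsHermitian) (p : ℝ[X]) :
    Polynomial.aeval M p = (hM.eigenvectorUnitary : Matrix (Fin m) (Fin m) ℝ) *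
      Matrix.diagonal (fun j => p.eval (hM.eigenvalues j)) *
      star (hM.eigenvectorUnitary : Matrix (Fin m) (Fin m) ℝ) := by
  set V := (hM.eigenvectorUnitary : Matrix (Fin m) (Fin m) ℝ) with hVdef
  induction p using Polynomial.induction_on' with
  | add p q ihp ihq =>
    rw [map_add, ihp, ihq]
    have hd : Matrix.diagonal (fun j => (p + q).eval (hM.eigenvalues j))
        = Matrix.diagonal (fun j => p.eval (hM.eigenvalues j)) +
          Matrix.diagonal (fun j => q.eval (hM.eigenvalues j)) := by
      ext i j
      by_cases h : i = j <;> simp [Matrix.diagonal_apply, h]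
    rw [hd, Matrix.mul_add, Matrix.add_mul]
  | monomial N a =>
    rw [Polynomial.aeval_monomial, pow_conj hM N]
    have : Matrix.diagonal (fun j => (Polynomial.monomial N a).eval (hM.eigenvalues j))
        = a • Matrix.diagonal (fun j => hM.eigenvalues j ^ N) := by
      ext i j
      by_cases h : i = j <;> simp [Matrix.diagonal_apply, h, Polynomial.eval_monomial]
    rw [this, Matrix.mul_smul, Matrix.smul_mul]
    rw [show (algebraMap ℝ (Matrix (Fin m) (Fin m) ℝ)) a = a • 1 from Algebra.algebraMap_eq_smul_one a]
    rw [smul_mul_assoc, one_mul]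

end Spectral

section PolyBound
variable {m : ℕ}

lemma vecNorm_diag_le {f : Fin m → ℝ} {c : ℝ} (hc0 : 0 ≤ c) (hf : ∀ j, |f j| ≤ c)
    (u : Fin m → ℝ) : vecNorm ((Matrix.diagonal f).mulVec u) ≤ c * vecNorm u := by
  unfold vecNorm
  rw [← Real.sqrt_sq hc0, ← Real.sqrt_mul (sq_nonneg c)]
  apply Real.sqrt_le_sqrt
  rw [Finset.mul_sum]
  apply Finset.sum_le_sum
  intro i _
  rw [Matrix.mulVec_diagonal, mul_pow]
  apply mul_le_mul_of_nonneg_right _ (sq_nonneg _)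
  rw [← sq_abs (f i)]
  exact pow_le_pow_left₀ (abs_nonneg _) (hf i) 2

lemma polyBound {M : Matrix (Fin m) (Fin m) ℝ} (hM : M.IsHermitian) (p : ℝ[X]) {c : ℝ}
    (hc : ∀ j, |p.eval (hM.eigenvalues j)| ≤ c) (v : Fin m → ℝ) :
    vecNorm ((Polynomial.aeval M p).mulVec v) ≤ c * vecNorm v := by
  rcases isEmpty_or_nonempty (Fin m) with hm | hm
  · simp [vecNorm, Finset.univ_eq_empty]
  · have hc0 : 0 ≤ c := le_trans (abs_nonneg _) (hc (Classical.arbitrary _))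
    set V := (hM.eigenvectorUnitary : Matrix (Fin m) (Fin m) ℝ) with hVdef
    have hmem := (hM.eigenvectorUnitary).2
    have hV1 : star V * V = 1 := (Unitary.mem_iff.mp hmem).1
    have hV2 : V * star V = 1 := (Unitary.mem_iff.mp hmem).2
    have hsV : star V = Vᵀ := by
      rw [Matrix.star_eq_conjTranspose, Matrix.conjTranspose_eq_transpose_of_trivial]
    have horthV : Vᵀ * V = 1 := by rw [← hsV]; exact hV1
    have horthW : (star V)ᵀ * star V = 1 := by
      rw [hsV, Matrix.transpose_transpose, ← hsV]; exact hV2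
    rw [aeval_conj hM p, ← Matrix.mulVec_mulVec, ← Matrix.mulVec_mulVec]
    rw [vecNorm_mulVec_orth horthV]
    calc vecNorm ((Matrix.diagonal fun j => p.eval (hM.eigenvalues j)).mulVec (star V *ᵥ v))
        ≤ c * vecNorm (star V *ᵥ v) := vecNorm_diag_le hc0 hc _
      _ = c * vecNorm v := by rw [vecNorm_mulVec_orth horthW]

end PolyBound

section Cheb

lemma chebT_bound (i : ℤ) {z : ℝ} (hz : z ∈ Set.Icc (-1:ℝ) 1) :
    |(Polynomial.Chebyshev.T ℝ i).eval z| ≤ 1 := by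
  obtain ⟨θ, hθ⟩ : ∃ θ, Real.cos θ = z := ⟨Real.arccos z, Real.cos_arccos hz.1 hz.2⟩
  rw [← hθ, Polynomial.Chebyshev.T_real_cos]
  exact Real.abs_cos_le_one _

lemma chebU_bound (N : ℕ) {z : ℝ} (hz : z ∈ Set.Icc (-1:ℝ) 1) :
    |(Polynomial.Chebyshev.U ℝ (N : ℤ)).eval z| ≤ N + 1 := by
  have hzabs : |z| ≤ 1 := abs_le.mpr ⟨hz.1, hz.2⟩
  induction N with
  | zero => simp [Polynomial.Chebyshev.U_zero]
  | succ N ih =>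
    have hrec := Polynomial.Chebyshev.U_eq_X_mul_U_add_T ℝ (N : ℤ)
    have hcast : ((N + 1 : ℕ) : ℤ) = (N : ℤ) + 1 := by push_cast; ring
    rw [hcast, hrec]
    rw [Polynomial.eval_add, Polynomial.eval_mul, Polynomial.eval_X]
    calc |z * (Polynomial.Chebyshev.U ℝ (N:ℤ)).eval z +
          (Polynomial.Chebyshev.T ℝ ((N:ℤ)+1)).eval z|
        ≤ |z * (Polynomial.Chebyshev.U ℝ (N:ℤ)).eval z| +
          |(Polynomial.Chebyshev.T ℝ ((N:ℤ)+1)).eval z| := abs_add_le _ _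
      _ ≤ 1 * (N + 1) + 1 := by
          apply add_le_add _ (chebT_bound _ hz)
          rw [abs_mul]
          exact mul_le_mul hzabs ih (abs_nonneg _) zero_le_one
      _ ≤ (N + 1 : ℕ) + 1 := by push_cast; ring_nf; norm_num

end Cheb

section Tri
variable {k : ℕ} {T : Matrix (Fin k) (Fin k) ℝ}

lemma tri_pow_entry (h : IsTridiagonal T) :
    ∀ (N : ℕ) (r c : Fin k), (N : ℤ) < |(r : ℤ) - (c : ℤ)| → (T ^ N) r c = 0 := by
  intro N
  induction N with
  | zero =>
    intro r c hrc
    have hne : r ≠ c := by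
      intro hrc'
      subst hrc'
      simp at hrc
    rw [pow_zero]
    exact Matrix.one_apply_ne hne
  | succ N ih =>
    intro r c hrc
    rw [pow_succ, Matrix.mul_apply]
    apply Finset.sum_eq_zero
    intro j _
    by_cases hj : 1 < |(j : ℤ) - (c : ℤ)|
    · rw [h j c hj, mul_zero]
    · push_neg at hj
      have htri : |(r:ℤ) - c| ≤ |(r:ℤ) - j| + |(j:ℤ) - c| := abs_sub_le _ _ _
      have : (N : ℤ) < |(r:ℤ) - j| := by
        push_cast at hrc ⊢
        linarith
      rw [ih r j this, zero_mul]

lemma tri_aeval_entry (h : IsTridiagonal T) (p : Polynomial ℝ) (r c : Fin k)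
    (hdeg : (p.natDegree : ℤ) < |(r : ℤ) - (c : ℤ)|) :
    (Polynomial.aeval T p) r c = 0 := by
  rw [Polynomial.aeval_eq_sum_range, Matrix.sum_apply]
  apply Finset.sum_eq_zero
  intro N hN
  rw [Finset.mem_range] at hN
  have hN' : (N : ℤ) < |(r : ℤ) - (c : ℤ)| := by
    have : (N : ℤ) ≤ (p.natDegree : ℤ) := by exact_mod_cast Nat.lt_succ_iff.mp hN
    omega
  rw [Matrix.smul_apply, tri_pow_entry h N r c hN', smul_zero]

end Tri

section Deg

lemma natDegree_chebT_le (N : ℕ) : (Polynomial.Chebyshev.T ℝ (N : ℤ)).natDegree ≤ N := by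
  induction N using Nat.strong_induction_on with
  | _ N ih =>
    match N with
    | 0 => simp [Polynomial.Chebyshev.T_zero]
    | 1 => simp [Polynomial.Chebyshev.T_one, Polynomial.natDegree_X_le]
    | (N + 2) =>
      have hcast : ((N + 2 : ℕ) : ℤ) = (N : ℤ) + 2 := by push_cast; ring
      rw [hcast, Polynomial.Chebyshev.T_add_two]
      apply le_trans (Polynomial.natDegree_sub_le _ _)
      have h1 : (2 * Polynomial.X * Polynomial.Chebyshev.T ℝ ((N:ℤ) + 1)).natDegree ≤ N + 2 := by
        apply le_trans (Polynomial.natDegree_mul_le)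
        have h2 : ((2 : Polynomial ℝ) * Polynomial.X).natDegree ≤ 1 := by
          apply le_trans (Polynomial.natDegree_mul_le)
          simp
        have h3 : (Polynomial.Chebyshev.T ℝ ((N:ℤ) + 1)).natDegree ≤ N + 1 := by
          have := ih (N + 1) (by omega)
          rwa [show ((N + 1 : ℕ) : ℤ) = (N : ℤ) + 1 by push_cast; ring] at this
        omega
      have h4 : (Polynomial.Chebyshev.T ℝ (N:ℤ)).natDegree ≤ N := ih N (by omega)
      omega

end Deg

section Eigen
variable {m : ℕ}

lemma eigen_abs_le (M : Matrix (Fin m) (Fin m) ℝ) {μ : ℝ} {v : Fin m → ℝ}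
    (hv : v ≠ 0) (he : M.mulVec v = μ • v) : |μ| ≤ matNorm M := by
  have h1 : vecNorm (M.mulVec v) ≤ matNorm M * vecNorm v := vecNorm_mulVec_le M v
  rw [he, vecNorm_smul] at h1
  exact le_of_mul_le_mul_right h1 (vecNorm_pos hv)

lemma eigS_bddAbove (M : Matrix (Fin m) (Fin m) ℝ) :
    BddAbove {μ : ℝ | ∃ v : Fin m → ℝ, v ≠ 0 ∧ M.mulVec v = μ • v} := by
  refine ⟨matNorm M, ?_⟩
  rintro μ ⟨v, hv, he⟩
  exact le_trans (le_abs_self μ) (eigen_abs_le M hv he)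

lemma eigS_bddBelow (M : Matrix (Fin m) (Fin m) ℝ) :
    BddBelow {μ : ℝ | ∃ v : Fin m → ℝ, v ≠ 0 ∧ M.mulVec v = μ • v} := by
  refine ⟨-matNorm M, ?_⟩
  rintro μ ⟨v, hv, he⟩
  have := eigen_abs_le M hv he
  have := neg_abs_le μ
  linarith

lemma herm_eigen_pair {M : Matrix (Fin m) (Fin m) ℝ} (hM : M.IsHermitian) (j : Fin m) :
    ∃ v : Fin m → ℝ, v ≠ 0 ∧ M.mulVec v = hM.eigenvalues j • v := by
  set V := (hM.eigenvectorUnitary : Matrix (Fin m) (Fin m) ℝ) with hVdef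
  have hmem := (hM.eigenvectorUnitary).2
  have hV1 : star V * V = 1 := (Unitary.mem_iff.mp hmem).1
  have hsV : star V = Vᵀ := by
    rw [Matrix.star_eq_conjTranspose, Matrix.conjTranspose_eq_transpose_of_trivial]
  have horthV : Vᵀ * V = 1 := by rw [← hsV]; exact hV1
  refine ⟨V.mulVec (Pi.single j 1), ?_, ?_⟩
  · intro h0
    have h1 : vecNorm (V.mulVec (Pi.single j 1)) = 1 := by
      rw [vecNorm_mulVec_orth horthV, vecNorm_single_one]
    rw [h0] at h1
    have : vecNorm (0 : Fin m → ℝ) = 0 := by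
      simp [vecNorm]
    rw [this] at h1
    norm_num at h1
  · have hspec' : M = V * Matrix.diagonal hM.eigenvalues * star V := by
      simpa using hM.spectral_theorem
    have hMV : M * V = V * Matrix.diagonal hM.eigenvalues := by
      conv_lhs => rw [hspec']
      simp only [Matrix.mul_assoc]
      rw [hV1, Matrix.mul_one]
    have hdiag : (Matrix.diagonal hM.eigenvalues).mulVec (Pi.single j 1)
        = hM.eigenvalues j • (Pi.single j 1 : Fin m → ℝ) := by
      funext i
      rw [Matrix.mulVec_diagonal]
      rcases eq_or_ne i j with rfl | hij
      · simp
      · simp [Pi.single_apply, hij]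
    rw [Matrix.mulVec_mulVec, hMV, ← Matrix.mulVec_mulVec, hdiag, Matrix.mulVec_smul]

lemma herm_eig_mem {M : Matrix (Fin m) (Fin m) ℝ} (hM : M.IsHermitian) (j : Fin m) :
    hM.eigenvalues j ∈ Set.Icc (lmin M) (lmax M) := by
  obtain ⟨v, hv, he⟩ := herm_eigen_pair hM j
  constructor
  · exact csInf_le (eigS_bddBelow M) ⟨v, hv, he⟩
  · exact le_csSup (eigS_bddAbove M) ⟨v, hv, he⟩

lemma lmin_le_lmax (A : Matrix (Fin m) (Fin m) ℝ) (hA : A.IsHermitian) :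
    lmin A ≤ lmax A := by
  rcases isEmpty_or_nonempty (Fin m) with hm | hm
  · have hS : {μ : ℝ | ∃ v : Fin m → ℝ, v ≠ 0 ∧ A.mulVec v = μ • v} = ∅ := by
      ext μ
      simp only [Set.mem_setOf_eq, Set.mem_empty_iff_false, iff_false, not_exists]
      intro v ⟨hv, _⟩
      exact hv (Subsingleton.elim v 0)
    rw [lmin, lmax, hS, Real.sInf_empty, Real.sSup_empty]
  · obtain ⟨j⟩ := hm
    obtain ⟨h1, h2⟩ := herm_eig_mem hA j
    linarith

end Eigen

section Helper

lemma mulVec_sum' {m n : ℕ} {ι : Type*} (M : Matrix (Fin m) (Fin n) ℝ) (s : Finset ι)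
    (f : ι → (Fin n → ℝ)) : M.mulVec (∑ t ∈ s, f t) = ∑ t ∈ s, M.mulVec (f t) := by
  simp only [← Matrix.mulVecLin_apply]
  exact map_sum (Matrix.mulVecLin M) f s

theorem lanczos_helper
    {n k : ℕ} (hk : 0 < k)
    (A : Matrix (Fin n) (Fin n) ℝ) (Q : Matrix (Fin n) (Fin k) ℝ)
    (qk1 : Fin n → ℝ) (β : ℝ) (E : Matrix (Fin n) (Fin k) ℝ) (T : Matrix (Fin k) (Fin k) ℝ)
    (hA : A.IsHermitian) (hT : T.IsHermitian) (hTtri : IsTridiagonal T)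
    (hrel : A * Q = Q * T +
      β • Matrix.vecMulVec qk1 (Pi.single (⟨k - 1, Nat.sub_lt hk Nat.one_pos⟩ : Fin k) 1) + E)
    (η : ℝ) (hη : 0 < η)
    (hTeig : ∀ (μ : ℝ) (v : Fin k → ℝ), v ≠ 0 → T.mulVec v = μ • v →
      μ ∈ Set.Icc (lmin A - η) (lmax A + η))
    (rmin δ : ℝ) (ℓ : Polynomial ℝ)
    (hrmin : rmin = lmin A - η)
    (hδdef : δ = 2 / ((lmax A + η) - rmin))
    (hℓdef : ℓ = Polynomial.C δ * (Polynomial.X - Polynomial.C rmin) - 1) :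
    ∀ i : ℕ, i < k →
      vecNorm (Q.mulVec ((Polynomial.aeval T ((Polynomial.Chebyshev.T ℝ (i : ℤ)).comp ℓ)).mulVec
            (Pi.single (⟨0, hk⟩ : Fin k) 1)) -
          (Polynomial.aeval A ((Polynomial.Chebyshev.T ℝ (i : ℤ)).comp ℓ)).mulVec
            (Q.mulVec (Pi.single (⟨0, hk⟩ : Fin k) 1))) ≤
        2 * (i : ℝ) ^ 2 / η * matNorm E := by
  have hrmaxrmin : (lmax A + η) - rmin = (lmax A - lmin A) + 2 * η := by
    rw [hrmin]; ring
  have hlml : lmin A ≤ lmax A := lmin_le_lmax A hA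
  have hden : 0 < (lmax A + η) - rmin := by rw [hrmaxrmin]; linarith
  have hδpos : 0 < δ := by rw [hδdef]; positivity
  have hδη : δ ≤ 1 / η := by
    rw [hδdef]
    rw [div_le_div_iff₀ hden hη]
    rw [hrmaxrmin]; linarith
  have hδ2 : δ * ((lmax A + η) - rmin) = 2 := by
    rw [hδdef]; field_simp
  -- the linear map sends [rmin, rmax] into [-1, 1]
  have hevalℓ : ∀ x : ℝ, ℓ.eval x = δ * (x - rmin) - 1 := by
    intro x; rw [hℓdef]; simp
  have hmapIcc : ∀ x ∈ Set.Icc rmin (lmax A + η), ℓ.eval x ∈ Set.Icc (-1:ℝ) 1 := by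
    intro x hx
    rw [hevalℓ]
    constructor
    · nlinarith [hx.1]
    · nlinarith [hx.2]
  have hAIcc : ∀ j, ℓ.eval (hA.eigenvalues j) ∈ Set.Icc (-1:ℝ) 1 := by
    intro j
    obtain ⟨h1, h2⟩ := herm_eig_mem hA j
    exact hmapIcc _ ⟨by rw [hrmin]; linarith, by linarith⟩
  have hTIcc : ∀ j, ℓ.eval (hT.eigenvalues j) ∈ Set.Icc (-1:ℝ) 1 := by
    intro j
    obtain ⟨v, hv, he⟩ := herm_eigen_pair hT j
    obtain ⟨h1, h2⟩ := hTeig _ v hv he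
    exact hmapIcc _ ⟨by rw [hrmin]; exact h1, h2⟩
  -- abbreviations
  set e1 : Fin k → ℝ := Pi.single (⟨0, hk⟩ : Fin k) 1 with he1def
  set ek : Fin k → ℝ := Pi.single (⟨k - 1, Nat.sub_lt hk Nat.one_pos⟩ : Fin k) 1 with hekdef
  set q1 : Fin n → ℝ := Q.mulVec e1 with hq1def
  set P : ℕ → Polynomial ℝ := fun N => (Polynomial.Chebyshev.T ℝ (N : ℤ)).comp ℓ with hPdef
  set d : ℕ → Fin n → ℝ :=
    fun j => Q.mulVec ((Polynomial.aeval T (P j)).mulVec e1) -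
      (Polynomial.aeval A (P j)).mulVec q1 with hddef
  set w : ℕ → Fin n → ℝ :=
    fun t => (if t = 0 then -δ else -(2*δ)) •
      (E.mulVec ((Polynomial.aeval T (P t)).mulVec e1)) with hwdef
  set g : ℤ → Matrix (Fin n) (Fin n) ℝ :=
    fun m => Polynomial.aeval A ((Polynomial.Chebyshev.U ℝ m).comp ℓ) with hgdef
  set Ab : Matrix (Fin n) (Fin n) ℝ := Polynomial.aeval A ℓ with hAbdef
  -- degree bound
  have hℓdeg : ℓ.natDegree ≤ 1 := by
    rw [hℓdef]
    apply le_trans (Polynomial.natDegree_sub_le _ _)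
    have h1 : (Polynomial.C δ * (Polynomial.X - Polynomial.C rmin)).natDegree ≤ 1 := by
      apply le_trans (Polynomial.natDegree_mul_le)
      simp [Polynomial.natDegree_X_sub_C]
    simp [h1]
  have hdegP : ∀ N : ℕ, (P N).natDegree ≤ N := by
    intro N
    calc (P N).natDegree ≤ (Polynomial.Chebyshev.T ℝ (N:ℤ)).natDegree * ℓ.natDegree :=
          Polynomial.natDegree_comp_le
      _ ≤ N * 1 := Nat.mul_le_mul (natDegree_chebT_le N) hℓdeg
      _ = N := Nat.mul_one N
  -- spectral bounds
  have hPTbound : ∀ (N : ℕ) (v : Fin k → ℝ),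
      vecNorm ((Polynomial.aeval T (P N)).mulVec v) ≤ 1 * vecNorm v := by
    intro N v
    apply polyBound hT
    intro j
    rw [Polynomial.eval_comp]
    exact chebT_bound _ (hTIcc j)
  have hUbound : ∀ (N : ℕ) (v : Fin n → ℝ),
      vecNorm ((g (N : ℤ)).mulVec v) ≤ ((N : ℝ) + 1) * vecNorm v := by
    intro N v
    apply polyBound hA
    intro j
    rw [Polynomial.eval_comp]
    exact chebU_bound _ (hAIcc j)
  have hwbound : ∀ t : ℕ, vecNorm (w t) ≤ 2 * δ * matNorm E := by
    intro t
    rw [hwdef]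
    simp only
    rw [vecNorm_smul]
    have hcoef : |if t = 0 then -δ else -(2*δ)| ≤ 2 * δ := by
      split <;> rw [abs_neg, abs_of_pos (by positivity)] <;> linarith
    calc |if t = 0 then -δ else -(2*δ)| * vecNorm (E.mulVec ((Polynomial.aeval T (P t)).mulVec e1))
        ≤ (2 * δ) * (matNorm E * vecNorm ((Polynomial.aeval T (P t)).mulVec e1)) := by
          apply mul_le_mul hcoef (vecNorm_mulVec_le _ _) (vecNorm_nonneg _) (by positivity)
      _ ≤ (2 * δ) * (matNorm E * (1 * vecNorm e1)) := by
          apply mul_le_mul_of_nonneg_left _ (by positivity)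
          exact mul_le_mul_of_nonneg_left (hPTbound t e1) (matNorm_nonneg E)
      _ = 2 * δ * matNorm E := by rw [he1def, vecNorm_single_one]; ring

  -- two as smul
  have htwo : ∀ {p : ℕ} (Z : Matrix (Fin p) (Fin p) ℝ),
      (2 : Matrix (Fin p) (Fin p) ℝ) * Z = (2:ℝ) • Z := by
    intro p Z; rw [two_mul, two_smul]
  -- bandwidth kill
  have hkill : ∀ N : ℕ, (N:ℤ) < (k:ℤ) - 1 →
      ((Polynomial.aeval T (P N)).mulVec e1) ⟨k-1, Nat.sub_lt hk Nat.one_pos⟩ = 0 := by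
    intro N hN
    rw [he1def, Matrix.mulVec_single]
    simp only [MulOpposite.op_one, one_smul, Matrix.col_apply]
    apply tri_aeval_entry hTtri
    show ((P N).natDegree : ℤ) < |((k - 1 : ℕ) : ℤ) - ((0:ℕ):ℤ)|
    have h1 : |((k - 1 : ℕ) : ℤ) - ((0:ℕ):ℤ)| = (k:ℤ) - 1 := by
      rw [abs_of_nonneg (by omega)]; omega
    rw [h1]
    have := hdegP N
    omega
  -- the perturbed commutation relation
  have haev : ∀ {p : ℕ} (M : Matrix (Fin p) (Fin p) ℝ),
      Polynomial.aeval M ℓ = δ • M - (δ * rmin) • (1 : Matrix (Fin p) (Fin p) ℝ) - 1 := by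
    intro p M
    rw [hℓdef, _root_.map_sub, _root_.map_one, _root_.map_mul, Polynomial.aeval_C, _root_.map_sub, Polynomial.aeval_X,
      Polynomial.aeval_C, Algebra.algebraMap_eq_smul_one, Algebra.algebraMap_eq_smul_one,
      smul_mul_assoc, one_mul, smul_sub, smul_smul]
  have hcomm : Q * (Polynomial.aeval T ℓ) =
      Ab * Q - δ • (β • Matrix.vecMulVec qk1 ek + E) := by
    rw [haev T, hAbdef, haev A]
    simp only [Matrix.mul_sub, Matrix.sub_mul, Matrix.mul_smul, Matrix.smul_mul,
      Matrix.mul_one, Matrix.one_mul]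
    rw [hrel]
    module
  have hcommv : ∀ x : Fin k → ℝ, x ⟨k-1, Nat.sub_lt hk Nat.one_pos⟩ = 0 →
      Q.mulVec ((Polynomial.aeval T ℓ).mulVec x) =
        Ab.mulVec (Q.mulVec x) - δ • (E.mulVec x) := by
    intro x hx
    have h1 : ek ⬝ᵥ x = 0 := by rw [hekdef, single_dotProduct, one_mul, hx]
    have hvv : (Matrix.vecMulVec qk1 ek).mulVec x = 0 := by
      funext i'
      have : (Matrix.vecMulVec qk1 ek).mulVec x i' = qk1 i' * (ek ⬝ᵥ x) := by
        simp [Matrix.mulVec, Matrix.vecMulVec_apply, dotProduct,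
          Finset.mul_sum, mul_assoc]
      rw [this, h1, mul_zero]
      rfl
    rw [Matrix.mulVec_mulVec, hcomm, Matrix.sub_mulVec, ← Matrix.mulVec_mulVec,
      Matrix.smul_mulVec, Matrix.add_mulVec, Matrix.smul_mulVec, hvv,
      smul_zero, zero_add]
  -- base cases
  have hP0 : P 0 = 1 := by
    rw [hPdef]
    simp only [Nat.cast_zero]
    rw [Polynomial.Chebyshev.T_zero, Polynomial.one_comp]
  have hP1 : P 1 = ℓ := by
    rw [hPdef]
    simp only [Nat.cast_one]
    rw [Polynomial.Chebyshev.T_one, Polynomial.X_comp]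
  have hd0 : d 0 = 0 := by
    rw [hddef]
    simp only
    rw [hP0, _root_.map_one, _root_.map_one, Matrix.one_mulVec, Matrix.one_mulVec, hq1def, sub_self]
  have hd1 : 1 < k → d 1 = w 0 := by
    intro h1k
    have hx : e1 ⟨k-1, Nat.sub_lt hk Nat.one_pos⟩ = 0 := by
      rw [he1def]
      apply Pi.single_eq_of_ne
      intro hcontra
      rw [Fin.mk.injEq] at hcontra
      omega
    have hw0 : w 0 = (-δ) • (E.mulVec e1) := by
      rw [hwdef]
      simp only
      rw [hP0, _root_.map_one, Matrix.one_mulVec]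
      norm_num
    rw [hddef]
    simp only
    rw [hw0, hP1, hcommv e1 hx, hq1def]
    module
  -- recurrences
  have hgrec : ∀ m : ℤ, g (m + 2) = (2:ℝ) • (Ab * g (m + 1)) - g m := by
    intro m
    rw [hgdef]
    simp only
    rw [Polynomial.Chebyshev.U_add_two, Polynomial.sub_comp, Polynomial.mul_comp,
      Polynomial.mul_comp, Polynomial.ofNat_comp, Polynomial.X_comp,
      _root_.map_sub, _root_.map_mul, _root_.map_mul, _root_.map_natCast, mul_assoc,
      show ((2:ℕ) : Matrix (Fin n) (Fin n) ℝ) = 2 by norm_cast, htwo, ← hAbdef]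
  have hg0 : g 0 = 1 := by
    rw [hgdef]
    simp only
    rw [Polynomial.Chebyshev.U_zero, Polynomial.one_comp, _root_.map_one]
  have hgm1 : g (-1) = 0 := by
    rw [hgdef]
    simp only
    rw [Polynomial.Chebyshev.U_neg_one, Polynomial.zero_comp, _root_.map_zero]
  have hPrec : ∀ N : ℕ, P (N + 2) = 2 * ℓ * P (N + 1) - P N := by
    intro N
    rw [hPdef]
    simp only
    have hc2 : ((N + 2 : ℕ) : ℤ) = (N : ℤ) + 2 := by push_cast; ring
    have hc1 : ((N + 1 : ℕ) : ℤ) = (N : ℤ) + 1 := by push_cast; ring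
    rw [hc2, hc1, Polynomial.Chebyshev.T_add_two, Polynomial.sub_comp, Polynomial.mul_comp,
      Polynomial.mul_comp, Polynomial.ofNat_comp, Polynomial.X_comp]
    norm_cast
  have hrec : ∀ N : ℕ, N + 2 < k →
      d (N + 2) = (2:ℝ) • (Ab.mulVec (d (N + 1))) - d N + w (N + 1) := by
    intro N hN
    have hx0 : ((Polynomial.aeval T (P (N+1))).mulVec e1) ⟨k-1, Nat.sub_lt hk Nat.one_pos⟩
        = 0 := hkill (N+1) (by omega)
    have hSrec : Polynomial.aeval T (P (N+2)) =
        (2:ℝ) • (Polynomial.aeval T ℓ * Polynomial.aeval T (P (N+1))) -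
          Polynomial.aeval T (P N) := by
      rw [hPrec N, _root_.map_sub, _root_.map_mul, _root_.map_mul, _root_.map_ofNat, mul_assoc, htwo]
    have hRrec : Polynomial.aeval A (P (N+2)) =
        (2:ℝ) • (Ab * Polynomial.aeval A (P (N+1))) - Polynomial.aeval A (P N) := by
      rw [hPrec N, _root_.map_sub, _root_.map_mul, _root_.map_mul, _root_.map_ofNat, mul_assoc, htwo, ← hAbdef]
    rw [hddef, hwdef]
    simp only [if_neg (Nat.succ_ne_zero N)]
    rw [hSrec, hRrec]
    rw [Matrix.sub_mulVec, Matrix.sub_mulVec, Matrix.smul_mulVec,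
      Matrix.smul_mulVec, ← Matrix.mulVec_mulVec, ← Matrix.mulVec_mulVec,
      Matrix.mulVec_sub, Matrix.mulVec_smul, hcommv _ hx0, Matrix.mulVec_sub]
    module
  -- the explicit solution of the recurrence
  have hsum : ∀ j : ℕ, j < k →
      d j = ∑ t ∈ Finset.range j, (g ((j:ℤ) - 1 - (t:ℤ))).mulVec (w t) := by
    intro j
    induction j using Nat.strong_induction_on with
    | _ j ih =>
      rcases j with _ | (_ | N)
      · intro _
        rw [hd0, Finset.sum_range_zero]
      · intro h1k
        rw [hd1 h1k, Finset.sum_range_one]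
        have hc : ((1:ℕ):ℤ) - 1 - ((0:ℕ):ℤ) = 0 := by norm_num
        rw [hc, hg0, Matrix.one_mulVec]
      · intro hNk
        rw [hrec N hNk, ih (N+1) (by omega) (by omega), ih N (by omega) (by omega)]
        have hc : ∀ t : ℕ, ((N+1:ℕ):ℤ) - 1 - (t:ℤ) = (N:ℤ) - t := by
          intro t; push_cast; ring
        have hc2 : ∀ t : ℕ, ((N+2:ℕ):ℤ) - 1 - (t:ℤ) = (N:ℤ) + 1 - t := by
          intro t; push_cast; ring
        simp only [hc, hc2]
        rw [Finset.sum_range_succ (fun t => (g ((N:ℤ) + 1 - t)).mulVec (w t)) (N+1)]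
        have hlast : (N:ℤ) + 1 - ((N+1:ℕ):ℤ) = 0 := by push_cast; ring
        rw [hlast, hg0, Matrix.one_mulVec]
        have hexts : ∑ t ∈ Finset.range N, (g ((N:ℤ) - 1 - t)).mulVec (w t)
            = ∑ t ∈ Finset.range (N+1), (g ((N:ℤ) - 1 - t)).mulVec (w t) := by
          rw [Finset.sum_range_succ]
          have h0 : (N:ℤ) - 1 - ((N:ℕ):ℤ) = -1 := by push_cast; ring
          rw [h0, hgm1, Matrix.zero_mulVec, add_zero]
        rw [hexts, mulVec_sum', Finset.smul_sum, ← Finset.sum_sub_distrib]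
        congr 1
        apply Finset.sum_congr rfl
        intro t _
        have h1 : (N:ℤ) + 1 - t = ((N:ℤ) - 1 - t) + 2 := by ring
        rw [h1, hgrec ((N:ℤ) - 1 - t)]
        have h2 : ((N:ℤ) - 1 - t) + 1 = (N:ℤ) - t := by ring
        rw [h2, Matrix.sub_mulVec, Matrix.smul_mulVec, Matrix.mulVec_mulVec]
  -- final bound
  intro i hik
  have hfin : vecNorm (d i) ≤ 2 * (i : ℝ) ^ 2 / η * matNorm E := by
    rcases Nat.eq_zero_or_pos i with rfl | hipos
    · rw [hd0, vecNorm_zero]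
      norm_num
    · rw [hsum i hik]
      calc vecNorm (∑ t ∈ Finset.range i, (g ((i:ℤ) - 1 - (t:ℤ))).mulVec (w t))
          ≤ ∑ t ∈ Finset.range i, vecNorm ((g ((i:ℤ) - 1 - (t:ℤ))).mulVec (w t)) :=
            vecNorm_sum_le _ _
        _ ≤ ∑ t ∈ Finset.range i, (i:ℝ) * (2 * δ * matNorm E) := by
            apply Finset.sum_le_sum
            intro t ht
            rw [Finset.mem_range] at ht
            have hm : ((i:ℤ) - 1 - (t:ℤ)) = ((i - 1 - t : ℕ) : ℤ) := by omega
            rw [hm]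
            calc vecNorm ((g ((i - 1 - t : ℕ) : ℤ)).mulVec (w t))
                ≤ (((i - 1 - t : ℕ) : ℝ) + 1) * vecNorm (w t) := hUbound _ _
              _ ≤ (i:ℝ) * (2 * δ * matNorm E) := by
                  apply mul_le_mul _ (hwbound t) (vecNorm_nonneg _) (by positivity)
                  have h3 : (i - 1 - t : ℕ) + 1 ≤ i := by omega
                  exact_mod_cast h3
        _ = (i:ℝ) * ((i:ℝ) * (2 * δ * matNorm E)) := by
            rw [Finset.sum_const, Finset.card_range, nsmul_eq_mul]
        _ ≤ 2 * (i : ℝ) ^ 2 / η * matNorm E := by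
            have hstep : 2*(i:ℝ)^2*δ*matNorm E ≤ 2*(i:ℝ)^2*(1/η)*matNorm E := by
              apply mul_le_mul_of_nonneg_right _ (matNorm_nonneg E)
              exact mul_le_mul_of_nonneg_left hδη (by positivity)
            calc (i:ℝ) * ((i:ℝ) * (2 * δ * matNorm E)) = 2*(i:ℝ)^2*δ*matNorm E := by ring
              _ ≤ 2*(i:ℝ)^2*(1/η)*matNorm E := hstep
              _ = 2 * (i : ℝ) ^ 2 / η * matNorm E := by ring
  simp only [hddef, hPdef, hq1def, he1def] at hfin
  exact hfin

end Helper

/-- Finite-precision Lanczos applies shifted Chebyshev polynomials stably: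
with perturbed Lanczos relation `A Q = Q T + β q_{k+1} e_kᵀ + E` and all eigenvalues of `T`
in `[λmin(A) - η, λmax(A) + η]`, for all `i < k`,
`‖Q·T̄_i(T)·e₁ - T̄_i(A)·q₁‖ ≤ (2 i² / η)·‖E‖`. -/
theorem lanczos_applies_chebyshev_stably
    {n k : ℕ} (hk : 0 < k)
    (A : Matrix (Fin n) (Fin n) ℝ) (Q : Matrix (Fin n) (Fin k) ℝ)
    (qk1 : Fin n → ℝ) (β : ℝ) (E : Matrix (Fin n) (Fin k) ℝ) (T : Matrix (Fin k) (Fin k) ℝ)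
    (hA : A.IsHermitian) (hT : T.IsHermitian) (hTtri : IsTridiagonal T)
    (hrel : A * Q = Q * T +
      β • Matrix.vecMulVec qk1 (Pi.single (⟨k - 1, Nat.sub_lt hk Nat.one_pos⟩ : Fin k) 1) + E)
    (η : ℝ) (hη : 0 < η)
    (hTeig : ∀ (μ : ℝ) (v : Fin k → ℝ), v ≠ 0 → T.mulVec v = μ • v →
      μ ∈ Set.Icc (lmin A - η) (lmax A + η)) :
    ∀ i : ℕ, i < k →
      vecNorm (Q.mulVec ((Polynomial.aeval T (shiftedCheb A η i)).mulVec
            (Pi.single (⟨0, hk⟩ : Fin k) 1)) -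
          (Polynomial.aeval A (shiftedCheb A η i)).mulVec
            (Q.mulVec (Pi.single (⟨0, hk⟩ : Fin k) 1))) ≤
        2 * (i : ℝ) ^ 2 / η * matNorm E := by
  intro i hik
  have h := lanczos_helper hk A Q qk1 β E T hA hT hTtri hrel η hη hTeig
    (lmin A - η) (2 / ((lmax A + η) - (lmin A - η)))
    (Polynomial.C (2 / ((lmax A + η) - (lmin A - η))) *
      (Polynomial.X - Polynomial.C (lmin A - η)) - 1) rfl rfl rfl i hik
  simpa [shiftedCheb] using h
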